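/- Let p be an odd prime, u ∈ ℚ_p/ℤ_p, and v ∈ (ℚ_p/ℤ_p)^n, not both of order 1. Then the orbit of the pair (u,v) under the action of ℤ_p^× given by t·(u,v) = (t²u, tv) has cardinality at least (1/4)·max(ord(u), ord(v)), where ord denotes the order of an element in the respective torsion group. -/

import Mathlib

/-- `ℤ_p` as an additive subgroup of `ℚ_p`. -/
noncomputable def Zp (p : ℕ) [Fact p.Prime] : AddSubgroup ℚ_[p] :=
  (PadicInt.subring p).toAddSubgroup

/-- `ℤ_p^n` as an additive subgroup of `ℚ_p^n`. -/
noncomputable def ZpN (p : ℕ) [Fact p.Prime] (n : ℕ) : AddSubgroup (Fin n → ℚ_[p]) :=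
  AddSubgroup.pi Set.univ fun _ => (PadicInt.subring p).toAddSubgroup

section Aux
variable {p : ℕ} [hp : Fact p.Prime]

lemma mem_Zp_iff {x : ℚ_[p]} : x ∈ Zp p ↔ ‖x‖ ≤ 1 := Iff.rfl

lemma mem_ZpN_iff {n : ℕ} {x : Fin n → ℚ_[p]} : x ∈ ZpN p n ↔ ∀ i, ‖x i‖ ≤ 1 := by
  simp [ZpN, AddSubgroup.mem_pi, PadicInt.mem_subring_iff]

lemma zsmul_mk_u (c : ℤ) (u : ℚ_[p]) :
    c • (QuotientAddGroup.mk u : ℚ_[p] ⧸ Zp p) = QuotientAddGroup.mk ((c : ℚ_[p]) * u) := by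
  rw [← QuotientAddGroup.mk_zsmul]
  norm_num [zsmul_eq_mul]

lemma zsmul_mk_v {n : ℕ} (c : ℤ) (v : Fin n → ℚ_[p]) :
    c • (QuotientAddGroup.mk v : (Fin n → ℚ_[p]) ⧸ ZpN p n) =
      QuotientAddGroup.mk (fun i => (c : ℚ_[p]) * v i) := by
  rw [← QuotientAddGroup.mk_zsmul]
  congr 1

/-- choose an exponent killing a p-adic number, cofinally. -/
lemma exists_kill (x : ℚ_[p]) : ∃ K : ℕ, ∀ K', K ≤ K' → ‖(p : ℚ_[p]) ^ K' * x‖ ≤ 1 := by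
  have hp1 : (1 : ℝ) < (p : ℝ) := by exact_mod_cast hp.out.one_lt
  obtain ⟨K, hK⟩ := pow_unbounded_of_one_lt ‖x‖ hp1
  refine ⟨K, fun K' hK' => ?_⟩
  rw [norm_mul, Padic.norm_p_pow]
  have h1 : ‖x‖ ≤ (p : ℝ) ^ (K' : ℤ) :=
    le_trans hK.le (by exact_mod_cast pow_le_pow_right₀ hp1.le hK')
  calc (p : ℝ) ^ (-(K' : ℤ)) * ‖x‖ ≤ (p : ℝ) ^ (-(K' : ℤ)) * (p : ℝ) ^ (K' : ℤ) := by
        apply mul_le_mul_of_nonneg_left h1 (zpow_nonneg (by positivity) _)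
    _ = 1 := by
        rw [← zpow_add₀ (by positivity : (p:ℝ) ≠ 0)]
        norm_num

lemma isUnit_val_cast {j : ℕ} (hj : 1 ≤ j) (x : (ZMod (p ^ j))ˣ) :
    IsUnit (((x : ZMod (p ^ j)).val : ℤ_[p])) := by
  rw [PadicInt.isUnit_iff]
  have hco := ZMod.val_coe_unit_coprime x
  have hnd : ¬ (p : ℤ) ∣ ((x : ZMod (p ^ j)).val : ℤ) := by
    intro h
    have h' : p ∣ (x : ZMod (p ^ j)).val := by exact_mod_cast h
    have h2 : p ∣ Nat.gcd ((x : ZMod (p ^ j)).val) (p ^ j) :=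
      Nat.dvd_gcd h' (dvd_pow_self p (by omega))
    rw [hco] at h2
    have := Nat.le_of_dvd one_pos h2
    have := hp.out.two_le
    omega
  have hle := PadicInt.norm_le_one (((x : ZMod (p ^ j)).val : ℤ_[p]))
  have hlt := (PadicInt.norm_int_lt_one_iff_dvd (p := p) ((x : ZMod (p ^ j)).val : ℤ)).not
  push_cast at hlt
  exact le_antisymm hle (not_lt.mp (hlt.mpr hnd))

/-- Lift a unit of `ZMod (p^j)` to a unit of `ℤ_p`. -/
noncomputable def padicLift {j : ℕ} (hj : 1 ≤ j) (x : (ZMod (p ^ j))ˣ) : ℤ_[p]ˣ :=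
  (isUnit_val_cast hj x).unit

lemma padicLift_coe {j : ℕ} (hj : 1 ≤ j) (x : (ZMod (p ^ j))ˣ) :
    ((padicLift hj x : ℤ_[p]) : ℤ_[p]) = (((x : ZMod (p ^ j)).val : ℕ) : ℤ_[p]) := rfl

lemma toZModPow_padicLift {j : ℕ} (hj : 1 ≤ j) (x : (ZMod (p ^ j))ˣ) :
    PadicInt.toZModPow j ((padicLift hj x : ℤ_[p])) = (x : ZMod (p ^ j)) := by
  haveI : NeZero (p ^ j) := ⟨pow_ne_zero j hp.out.ne_zero⟩
  rw [padicLift_coe, map_natCast]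
  exact ZMod.natCast_rightInverse _

/-- square roots of one -/
lemma units_sq_eq_one {k : ℕ} (hk : 1 ≤ k) (hodd : p ≠ 2) (z : (ZMod (p ^ k))ˣ)
    (hz : z ^ 2 = 1) : z = 1 ∨ z = -1 := by
  haveI : NeZero (p ^ k) := ⟨pow_ne_zero k hp.out.ne_zero⟩
  set b : ℕ := (z : ZMod (p ^ k)).val with hb
  have hzb : ((b : ℕ) : ZMod (p ^ k)) = (z : ZMod (p ^ k)) := ZMod.natCast_rightInverse _
  have h1 : ((b : ZMod (p ^ k)) : ZMod (p ^ k)) ^ 2 = 1 := by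
    rw [hzb]
    have h := congrArg Units.val hz
    push_cast at h
    simpa using h
  have h2 : ((p : ℤ) ^ k) ∣ ((b : ℤ) - 1) * ((b : ℤ) + 1) := by
    have : (((b : ℤ) ^ 2 - 1 : ℤ) : ZMod (p ^ k)) = 0 := by push_cast [h1]; ring
    rw [ZMod.intCast_zmod_eq_zero_iff_dvd] at this
    push_cast at this
    convert this using 1
    ring
  have hpp : Prime (p : ℤ) := Nat.prime_iff_prime_int.mp hp.out
  have hnot2 : ¬ ((p:ℤ) ∣ (b:ℤ) - 1 ∧ (p:ℤ) ∣ (b:ℤ) + 1) := by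
    rintro ⟨ha, hb'⟩
    have : (p : ℤ) ∣ 2 := by
      have := dvd_sub hb' ha
      simpa using this
    have hd2 : (p : ℕ) ∣ 2 := by exact_mod_cast this
    have := Nat.le_of_dvd (by norm_num) hd2
    have := hp.out.two_le
    omega
  by_cases hd : (p : ℤ) ∣ (b : ℤ) + 1
  · have hnd : ¬ (p : ℤ) ∣ (b : ℤ) - 1 := fun h => hnot2 ⟨h, hd⟩
    have hcop : IsCoprime ((p : ℤ) ^ k) ((b : ℤ) - 1) :=
      ((hpp.coprime_iff_not_dvd).mpr hnd).pow_left
    have : ((p : ℤ) ^ k) ∣ (b : ℤ) + 1 := hcop.dvd_of_dvd_mul_left h2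
    right
    refine Units.ext ?_
    have : (((b : ℤ) + 1 : ℤ) : ZMod (p ^ k)) = 0 := by
      rw [ZMod.intCast_zmod_eq_zero_iff_dvd]; exact_mod_cast this
    push_cast at this
    rw [hzb] at this
    have : (z : ZMod (p ^ k)) = -1 := by linear_combination this
    simpa using this
  · have hcop : IsCoprime ((p : ℤ) ^ k) ((b : ℤ) + 1) :=
      ((hpp.coprime_iff_not_dvd).mpr hd).pow_left
    have : ((p : ℤ) ^ k) ∣ (b : ℤ) - 1 := hcop.dvd_of_dvd_mul_right h2
    left
    refine Units.ext ?_
    have : (((b : ℤ) - 1 : ℤ) : ZMod (p ^ k)) = 0 := by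
      rw [ZMod.intCast_zmod_eq_zero_iff_dvd]; exact_mod_cast this
    push_cast at this
    rw [hzb] at this
    have : (z : ZMod (p ^ k)) = 1 := by linear_combination this
    simpa using this

end Aux

section Aux2
variable {p : ℕ} [hp : Fact p.Prime]

open QuotientAddGroup

/-- the orbit map. -/
noncomputable def fmap (p n : ℕ) [Fact p.Prime] (u : ℚ_[p]) (v : Fin n → ℚ_[p])
    (t : ℤ_[p]ˣ) : (ℚ_[p] ⧸ Zp p) × ((Fin n → ℚ_[p]) ⧸ ZpN p n) :=
  ((QuotientAddGroup.mk (((t : ℤ_[p]) : ℚ_[p]) ^ 2 * u) : ℚ_[p] ⧸ Zp p),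
   (QuotientAddGroup.mk (fun i => ((t : ℤ_[p]) : ℚ_[p]) * v i) :
      (Fin n → ℚ_[p]) ⧸ ZpN p n))

lemma norm_le_one_of_padicInt_mul (z : ℤ_[p]) {w : ℚ_[p]} (hw : ‖w‖ ≤ 1) :
    ‖(z : ℚ_[p]) * w‖ ≤ 1 := by
  rw [norm_mul]
  have h1 : ‖(z : ℚ_[p])‖ ≤ 1 := by
    rw [PadicInt.padic_norm_e_of_padicInt]; exact PadicInt.norm_le_one z
  have := mul_le_mul h1 hw (norm_nonneg _) zero_le_one
  simpa using this

lemma fmap_congr {n : ℕ} (u : ℚ_[p]) (v : Fin n → ℚ_[p]) {K : ℕ}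
    (hu : ‖(p : ℚ_[p]) ^ K * u‖ ≤ 1) (hv : ∀ i, ‖(p : ℚ_[p]) ^ K * v i‖ ≤ 1)
    {t t' : ℤ_[p]ˣ}
    (h : PadicInt.toZModPow K ((t : ℤ_[p])) = PadicInt.toZModPow K ((t' : ℤ_[p]))) :
    fmap p n u v t = fmap p n u v t' := by
  have hker : ((t : ℤ_[p]) - (t' : ℤ_[p])) ∈ RingHom.ker (PadicInt.toZModPow K) := by
    simp [RingHom.mem_ker, map_sub, h]
  rw [PadicInt.ker_toZModPow, Ideal.mem_span_singleton] at hker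
  obtain ⟨c, hc⟩ := hker
  have hq : ((t : ℤ_[p]) : ℚ_[p]) = ((t' : ℤ_[p]) : ℚ_[p]) + (p : ℚ_[p]) ^ K * (c : ℚ_[p]) := by
    have h2 := congrArg (fun z : ℤ_[p] => (z : ℚ_[p])) (sub_eq_iff_eq_add.mp hc)
    push_cast at h2
    rw [h2]; ring
  simp only [fmap, Prod.mk.injEq]
  constructor
  · rw [QuotientAddGroup.eq]
    rw [show -(((t : ℤ_[p]) : ℚ_[p]) ^ 2 * u) + ((t' : ℤ_[p]) : ℚ_[p]) ^ 2 * u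
        = ((-(c * ((t : ℤ_[p]) + (t' : ℤ_[p]))) : ℤ_[p]) : ℚ_[p]) * ((p : ℚ_[p]) ^ K * u) by
      push_cast
      linear_combination (-(((t : ℤ_[p]) : ℚ_[p]) + ((t' : ℤ_[p]) : ℚ_[p])) * u) * hq]
    exact norm_le_one_of_padicInt_mul _ hu
  · rw [QuotientAddGroup.eq, mem_ZpN_iff]
    intro i
    simp only [Pi.add_apply, Pi.neg_apply]
    rw [show -(((t : ℤ_[p]) : ℚ_[p]) * v i) + ((t' : ℤ_[p]) : ℚ_[p]) * v i
        = ((-c : ℤ_[p]) : ℚ_[p]) * ((p : ℚ_[p]) ^ K * v i) by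
      push_cast
      linear_combination (-(v i)) * hq]
    exact norm_le_one_of_padicInt_mul _ (hv i)

lemma dvd_of_mk_eq_u (u : ℚ_[p]) (c d : ℤ)
    (h : (QuotientAddGroup.mk ((c : ℚ_[p]) * u) : ℚ_[p] ⧸ Zp p)
        = QuotientAddGroup.mk ((d : ℚ_[p]) * u)) :
    (addOrderOf (QuotientAddGroup.mk u : ℚ_[p] ⧸ Zp p) : ℤ) ∣ d - c := by
  rw [addOrderOf_dvd_iff_zsmul_eq_zero, zsmul_mk_u, QuotientAddGroup.eq_zero_iff, mem_Zp_iff]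
  have hmem := QuotientAddGroup.eq.mp h
  rw [mem_Zp_iff] at hmem
  rw [show ((d - c : ℤ) : ℚ_[p]) * u = -((c : ℚ_[p]) * u) + (d : ℚ_[p]) * u by push_cast; ring]
  exact hmem

lemma dvd_of_mk_eq_v {n : ℕ} (v : Fin n → ℚ_[p]) (c d : ℤ)
    (h : (QuotientAddGroup.mk (fun i => (c : ℚ_[p]) * v i) : (Fin n → ℚ_[p]) ⧸ ZpN p n)
        = QuotientAddGroup.mk (fun i => (d : ℚ_[p]) * v i)) :
    (addOrderOf (QuotientAddGroup.mk v : (Fin n → ℚ_[p]) ⧸ ZpN p n) : ℤ) ∣ d - c := by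
  rw [addOrderOf_dvd_iff_zsmul_eq_zero, zsmul_mk_v, QuotientAddGroup.eq_zero_iff, mem_ZpN_iff]
  have hmem := QuotientAddGroup.eq.mp h
  rw [mem_ZpN_iff] at hmem
  intro i
  have := hmem i
  simp only [Pi.add_apply, Pi.neg_apply] at this
  rw [show ((d - c : ℤ) : ℚ_[p]) * v i = -((c : ℚ_[p]) * v i) + (d : ℚ_[p]) * v i by
    push_cast; ring]
  exact this

end Aux2

/-- let `p` be an odd prime, `u ∈ ℚ_p/ℤ_p`, `v ∈ (ℚ_p/ℤ_p)^n`, not both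
of order 1.  The orbit of `(u,v)` under `t·(u,v) = (t²u, tv)` for `t ∈ ℤ_pˣ` has
cardinality at least `(1/4)·max(ord u, ord v)`. -/
theorem orbit_card_ge_quarter_order (p n : ℕ) [Fact p.Prime] (hodd : p ≠ 2)
    (u : ℚ_[p]) (v : Fin n → ℚ_[p])
    (hne : ¬(addOrderOf ((QuotientAddGroup.mk u : ℚ_[p] ⧸ Zp p)) = 1 ∧
        addOrderOf ((QuotientAddGroup.mk v : (Fin n → ℚ_[p]) ⧸ ZpN p n)) = 1)) :
    max (addOrderOf ((QuotientAddGroup.mk u : ℚ_[p] ⧸ Zp p)))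
        (addOrderOf ((QuotientAddGroup.mk v : (Fin n → ℚ_[p]) ⧸ ZpN p n))) ≤
      4 * Nat.card (Set.range (fun t : ℤ_[p]ˣ =>
        ((QuotientAddGroup.mk (((t : ℤ_[p]) : ℚ_[p]) ^ 2 * u) : ℚ_[p] ⧸ Zp p),
         (QuotientAddGroup.mk (fun i => ((t : ℤ_[p]) : ℚ_[p]) * v i) :
            (Fin n → ℚ_[p]) ⧸ ZpN p n)))) := by
  classical
  have hp : Fact p.Prime := inferInstance
  have hp3 : 3 ≤ p := by have := hp.out.two_le; omega
  set F : ℤ_[p]ˣ → (ℚ_[p] ⧸ Zp p) × ((Fin n → ℚ_[p]) ⧸ ZpN p n) := fmap p n u v with hF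
  show max _ _ ≤ 4 * Nat.card (Set.range F)
  set Nu := addOrderOf ((QuotientAddGroup.mk u : ℚ_[p] ⧸ Zp p)) with hNu
  set Nv := addOrderOf ((QuotientAddGroup.mk v : (Fin n → ℚ_[p]) ⧸ ZpN p n)) with hNv
  -- choose a killing exponent K ≥ 1
  obtain ⟨Ku, hKu⟩ := exists_kill (p := p) u
  have hv' : ∀ i, ∃ K : ℕ, ∀ K', K ≤ K' → ‖(p : ℚ_[p]) ^ K' * v i‖ ≤ 1 :=
    fun i => exists_kill (v i)
  choose g hg using hv'
  set K : ℕ := max 1 (max Ku (Finset.univ.sup g)) with hKdef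
  have hK1 : 1 ≤ K := le_max_left _ _
  have hu : ‖(p : ℚ_[p]) ^ K * u‖ ≤ 1 := hKu K (le_trans (le_max_left _ _) (le_max_right _ _))
  have hv : ∀ i, ‖(p : ℚ_[p]) ^ K * v i‖ ≤ 1 := fun i =>
    hg i K (le_trans (le_trans (Finset.le_sup (Finset.mem_univ i)) (le_max_right _ _))
      (le_max_right _ _))
  -- the orders divide p^K
  have hnsmu : (p ^ K) • (QuotientAddGroup.mk u : ℚ_[p] ⧸ Zp p) = 0 := by
    have h : ((p ^ K : ℕ) : ℤ) • (QuotientAddGroup.mk u : ℚ_[p] ⧸ Zp p) = 0 := by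
      rw [zsmul_mk_u, QuotientAddGroup.eq_zero_iff, mem_Zp_iff]
      push_cast
      exact hu
    rwa [natCast_zsmul] at h
  have hnsmv : (p ^ K) • (QuotientAddGroup.mk v : (Fin n → ℚ_[p]) ⧸ ZpN p n) = 0 := by
    have h : ((p ^ K : ℕ) : ℤ) • (QuotientAddGroup.mk v : (Fin n → ℚ_[p]) ⧸ ZpN p n) = 0 := by
      rw [zsmul_mk_v, QuotientAddGroup.eq_zero_iff, mem_ZpN_iff]
      intro i
      push_cast
      exact hv i
    rwa [natCast_zsmul] at h
  have hNud : Nu ∣ p ^ K := addOrderOf_dvd_of_nsmul_eq_zero hnsmu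
  have hNvd : Nv ∣ p ^ K := addOrderOf_dvd_of_nsmul_eq_zero hnsmv
  obtain ⟨ku, hku, hkuE⟩ := (Nat.dvd_prime_pow hp.out).mp hNud
  obtain ⟨kv, hkv, hkvE⟩ := (Nat.dvd_prime_pow hp.out).mp hNvd
  -- finiteness of the range
  have hsub : Set.range F ⊆
      Set.range (fun x : (ZMod (p ^ K))ˣ => F (padicLift hK1 x)) := by
    rintro _ ⟨t, rfl⟩
    refine ⟨Units.map (PadicInt.toZModPow K).toMonoidHom t, ?_⟩
    refine fmap_congr u v hu hv ?_
    rw [toZModPow_padicLift]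
    rfl
  have hfin : (Set.range F).Finite := (Set.finite_range _).subset hsub
  haveI := hfin.to_subtype
  -- main counting step, for either component
  have main : ∀ k : ℕ, 1 ≤ k →
      (Nu = p ^ k ∨ Nv = p ^ k) → p ^ k ≤ 4 * Nat.card (Set.range F) := by
    intro k hk1' hcase
    haveI : NeZero (p ^ k) := ⟨pow_ne_zero _ hp.out.ne_zero⟩
    set L : (ZMod (p ^ k))ˣ → ℤ_[p]ˣ := padicLift hk1' with hL
    have hLcoe : ∀ z : (ZMod (p ^ k))ˣ,
        ((L z : ℤ_[p]) : ℚ_[p]) = (((z : ZMod (p ^ k)).val : ℕ) : ℚ_[p]) := by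
      intro z
      have := padicLift_coe hk1' z
      exact_mod_cast congrArg (fun w : ℤ_[p] => (w : ℚ_[p])) this
    rcases hcase with hNuk | hNvk
    · -- u-dominant case: squares
      set sq : (ZMod (p ^ k))ˣ → (ZMod (p ^ k))ˣ := fun x => x ^ 2 with hsqdef
      have hsq : ∀ x y : (ZMod (p ^ k))ˣ, F (L x) = F (L y) → x ^ 2 = y ^ 2 := by
        intro x y hxy
        have h1 := congrArg Prod.fst hxy
        simp only [hF, fmap] at h1
        rw [hLcoe x, hLcoe y] at h1
        rw [show ((((x : ZMod (p ^ k)).val : ℕ) : ℚ_[p])) ^ 2 * u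
            = ((((x : ZMod (p ^ k)).val ^ 2 : ℕ) : ℤ) : ℚ_[p]) * u by push_cast; ring,
          show ((((y : ZMod (p ^ k)).val : ℕ) : ℚ_[p])) ^ 2 * u
            = ((((y : ZMod (p ^ k)).val ^ 2 : ℕ) : ℤ) : ℚ_[p]) * u by push_cast; ring] at h1
        have hdvd := dvd_of_mk_eq_u u _ _ h1
        rw [← hNu, hNuk] at hdvd
        have hz : ((((y : ZMod (p ^ k)).val ^ 2 : ℕ) : ℤ)
            - (((x : ZMod (p ^ k)).val ^ 2 : ℕ) : ℤ) : ℤ) • (0:ℤ) = 0 := by simp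
        have h0 : (((((y : ZMod (p ^ k)).val ^ 2 : ℕ) : ℤ)
            - (((x : ZMod (p ^ k)).val ^ 2 : ℕ) : ℤ) : ℤ) : ZMod (p ^ k)) = 0 := by
          rw [ZMod.intCast_zmod_eq_zero_iff_dvd]
          exact_mod_cast hdvd
        push_cast at h0
        rw [ZMod.natCast_val, ZMod.natCast_val] at h0
        refine Units.ext ?_
        push_cast
        rw [sub_eq_zero] at h0
        simpa using h0.symm
      have himg : ∀ s : {a // a ∈ Finset.univ.image sq}, ∃ y, sq y = s.1 := by
        intro s
        obtain ⟨y, -, hy⟩ := Finset.mem_image.mp s.2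
        exact ⟨y, hy⟩
      choose w hw using himg
      have hinj2 : Function.Injective (fun s : {a // a ∈ Finset.univ.image sq} =>
          (⟨F (L (w s)), Set.mem_range_self _⟩ : Set.range F)) := by
        intro s s' h
        have h2 := hsq _ _ (congrArg Subtype.val h)
        refine Subtype.ext ?_
        rw [← hw s, ← hw s']
        exact h2
      have hcard1 : (Finset.univ.image sq).card ≤ Nat.card (Set.range F) := by
        calc (Finset.univ.image sq).card
            = Nat.card {a // a ∈ Finset.univ.image sq} := (Nat.card_eq_finsetCard _).symm
          _ ≤ _ := Nat.card_le_card_of_injective _ hinj2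
      have hfiber : Fintype.card (ZMod (p ^ k))ˣ ≤ 2 * (Finset.univ.image sq).card := by
        have h := Finset.card_le_mul_card_image (f := sq) Finset.univ 2 ?_
        · simpa using h
        · intro a ha
          obtain ⟨y, -, hy⟩ := Finset.mem_image.mp ha
          have hsubset : (Finset.univ.filter fun x => sq x = a) ⊆ {y, -y} := by
            intro x hx
            have hx2 : x ^ 2 = y ^ 2 := by
              have h3 := (Finset.mem_filter.mp hx).2
              rw [← hy] at h3
              exact h3
            have h4 : (x * y⁻¹) ^ 2 = 1 := by
              rw [mul_pow, hx2]
              simp [← mul_pow]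
            rcases units_sq_eq_one hk1' hodd _ h4 with h5 | h5
            · have : x = y := by
                have := congrArg (· * y) h5
                simpa [mul_assoc] using this
              simp [this]
            · have : x = -y := by
                have := congrArg (· * y) h5
                simpa [mul_assoc] using this
              simp [this]
          calc (Finset.univ.filter fun x => sq x = a).card ≤ ({y, -y} : Finset _).card :=
                Finset.card_le_card hsubset
            _ ≤ 2 := by
                apply le_trans (Finset.card_insert_le _ _)
                simp
      have e2 : Fintype.card (ZMod (p ^ k))ˣ = p ^ (k - 1) * (p - 1) := by
        rw [ZMod.card_units_eq_totient, Nat.totient_prime_pow hp.out (by omega)]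
      calc p ^ k = p ^ (k - 1) * p := by
            rw [← pow_succ]
            congr 1
            omega
        _ ≤ p ^ (k - 1) * (2 * (p - 1)) := Nat.mul_le_mul_left _ (by omega)
        _ = 2 * (p ^ (k - 1) * (p - 1)) := by ring
        _ ≤ 2 * (2 * (Finset.univ.image sq).card) := by
            rw [← e2]
            exact Nat.mul_le_mul_left _ hfiber
        _ = 4 * (Finset.univ.image sq).card := by ring
        _ ≤ 4 * Nat.card (Set.range F) := Nat.mul_le_mul_left _ hcard1
    · -- v-dominant case
      have hinj : Function.Injective (fun x : (ZMod (p ^ k))ˣ =>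
          (⟨F (L x), Set.mem_range_self _⟩ : Set.range F)) := by
        intro x y hxy
        have h2 := congrArg Prod.snd (congrArg Subtype.val hxy)
        simp only [hF, fmap] at h2
        have hx1 : (fun i => ((L x : ℤ_[p]) : ℚ_[p]) * v i)
            = fun i => ((((x : ZMod (p ^ k)).val : ℕ) : ℤ) : ℚ_[p]) * v i := by
          funext i; rw [hLcoe x]; push_cast; ring
        have hy1 : (fun i => ((L y : ℤ_[p]) : ℚ_[p]) * v i)
            = fun i => ((((y : ZMod (p ^ k)).val : ℕ) : ℤ) : ℚ_[p]) * v i := by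
          funext i; rw [hLcoe y]; push_cast; ring
        rw [hx1, hy1] at h2
        have hdvd := dvd_of_mk_eq_v v _ _ h2
        rw [← hNv, hNvk] at hdvd
        have h0 : (((((y : ZMod (p ^ k)).val : ℕ) : ℤ)
            - (((x : ZMod (p ^ k)).val : ℕ) : ℤ) : ℤ) : ZMod (p ^ k)) = 0 := by
          rw [ZMod.intCast_zmod_eq_zero_iff_dvd]
          exact_mod_cast hdvd
        push_cast at h0
        rw [ZMod.natCast_val, ZMod.natCast_val] at h0
        refine Units.ext ?_
        rw [sub_eq_zero] at h0
        simpa using h0.symm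
      have hcard1 : Fintype.card (ZMod (p ^ k))ˣ ≤ Nat.card (Set.range F) := by
        rw [← Nat.card_eq_fintype_card]
        exact Nat.card_le_card_of_injective _ hinj
      have e2 : Fintype.card (ZMod (p ^ k))ˣ = p ^ (k - 1) * (p - 1) := by
        rw [ZMod.card_units_eq_totient, Nat.totient_prime_pow hp.out (by omega)]
      calc p ^ k = p ^ (k - 1) * p := by
            rw [← pow_succ]
            congr 1
            omega
        _ ≤ p ^ (k - 1) * (4 * (p - 1)) := Nat.mul_le_mul_left _ (by omega)
        _ = 4 * (p ^ (k - 1) * (p - 1)) := by ring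
        _ ≤ 4 * Nat.card (Set.range F) := by
            rw [← e2]
            exact Nat.mul_le_mul_left _ hcard1
  -- orders are nonzero
  have hNu0 : Nu ≠ 0 := by
    intro h
    rw [h] at hNud
    simpa [pow_eq_zero_iff, hp.out.ne_zero] using Nat.eq_zero_of_zero_dvd hNud
  have hNv0 : Nv ≠ 0 := by
    intro h
    rw [h] at hNvd
    simpa [pow_eq_zero_iff, hp.out.ne_zero] using Nat.eq_zero_of_zero_dvd hNvd
  rcases max_choice Nu Nv with hmax | hmax
  · rw [hmax]
    have hku1 : 1 ≤ ku := by
      by_contra h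
      have hku0 : ku = 0 := by omega
      rw [hku0, pow_zero] at hkuE
      have : Nv ≤ Nu := by rw [← hmax]; exact le_max_right _ _
      exact hne ⟨hkuE, by omega⟩
    rw [hkuE]
    exact main ku hku1 (Or.inl hkuE)
  · rw [hmax]
    have hkv1 : 1 ≤ kv := by
      by_contra h
      have hkv0 : kv = 0 := by omega
      rw [hkv0, pow_zero] at hkvE
      have : Nu ≤ Nv := by rw [← hmax]; exact le_max_left _ _
      exact hne ⟨by omega, hkvE⟩
    rw [hkvE]
    exact main kv hkv1 (Or.inr hkvE)
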